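/- arXiv:1601.02191 — 2 statements merged into one kernel-verified Lean document; each statement's English description precedes it below -/
import Mathlib

section
/- Let f, g : ℝ → ℝ be continuous with f monotone increasing and g monotone decreasing (antitone), let Q ∈ ℝ, and suppose there exists r ∈ ℝ with f(r) = g(r). Then min(r, Q) maximizes the surplus function s(q) = ∫₀^q (g(x) − f(x)) dx over the set {q : q ≤ Q}. (The tie-optimization rule: the optimal interchange schedule is set at the intersection of the supply and demand curves, unless that quantity exceeds the interface capacity, in which case the schedule is set at the capacity Q.) -/
/-- The tie-optimization rule: the optimal interchange schedule is the
intersection of the supply and demand curves, capped at the interface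
capacity `Q`. -/
theorem stmt_8 (f g : ℝ → ℝ) (hfc : Continuous f) (hgc : Continuous g)
    (hf : Monotone f) (hg : Antitone g) (Q : ℝ) (r : ℝ) (hr : f r = g r)
    (s : ℝ → ℝ) (hs : ∀ q : ℝ, s q = ∫ x in (0:ℝ)..q, (g x - f x)) :
    IsMaxOn s {q : ℝ | q ≤ Q} (min r Q) := by
  set h : ℝ → ℝ := fun x => g x - f x with hh
  have hhc : Continuous h := hgc.sub hfc
  have hint : ∀ a b : ℝ, IntervalIntegrable h MeasureTheory.volume a b :=
    fun a b => hhc.intervalIntegrable a b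
  have hanti : Antitone h := fun a b hab => by
    simp only [hh]
    have := hf hab
    have := hg hab
    linarith
  have hr0 : h r = 0 := by simp [hh, hr]
  set m := min r Q with hm
  intro q hq
  simp only [Set.mem_setOf_eq] at hq
  have key : s m - s q = ∫ x in q..m, h x := by
    rw [hs, hs, intervalIntegral.integral_interval_sub_left (hint 0 m) (hint 0 q)]
  have hmr : m ≤ r := min_le_left _ _
  rcases le_or_gt q m with hqm | hqm
  · have : (0:ℝ) ≤ ∫ x in q..m, h x := by
      apply intervalIntegral.integral_nonneg hqm
      intro x hx
      have : h r ≤ h x := hanti (le_trans hx.2 hmr)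
      linarith [hr0 ▸ this]
    simp only [Set.mem_setOf_eq]
    linarith [key]
  · have hmQ : m = r := by
      rcases min_cases r Q with ⟨h1, _⟩ | ⟨h1, h2⟩
      · exact h1
      · exfalso; rw [hm, h1] at hqm; linarith
    rw [intervalIntegral.integral_symm] at key
    have hnp : (∫ x in m..q, h x) ≤ 0 := by
      have h2 : (0:ℝ) ≤ ∫ x in m..q, -h x := by
        apply intervalIntegral.integral_nonneg hqm.le
        intro x hx
        have : h x ≤ h r := hanti (hmQ ▸ hx.1)
        have := hr0 ▸ this
        linarith
      rw [intervalIntegral.integral_neg] at h2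
      linarith
    simp only [Set.mem_setOf_eq]
    linarith [key]
end

section
/- Let f, g, b : ℝ → ℝ be continuous functions with f and b monotone increasing and g monotone decreasing (antitone), let Q ∈ ℝ, and suppose r ≤ Q satisfies f(r) + b(r) = g(r). Then r maximizes the function q ↦ ∫₀^q (g(x) − f(x) − b(x)) dx over the set {q : q ≤ Q}. (The Stochastic Coordinated Transaction Scheduling (SCTS) rule: the optimal schedule is set at the intersection of the expected supply curve adjusted by the aggregated interface bid curve and the expected demand curve, i.e., at the optimizer of problem (P6).) -/
/-- The SCTS rule (problem (P6)): the optimal schedule is set at the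
intersection of the bid-adjusted expected supply curve and the expected
demand curve. -/
theorem stmt_10 (f g b : ℝ → ℝ) (hfc : Continuous f) (hgc : Continuous g)
    (hbc : Continuous b) (hf : Monotone f) (hb : Monotone b) (hg : Antitone g)
    (Q : ℝ) (r : ℝ) (hrQ : r ≤ Q) (hr : f r + b r = g r) :
    IsMaxOn (fun q : ℝ => ∫ x in (0:ℝ)..q, (g x - f x - b x)) {q : ℝ | q ≤ Q} r := by
  intro q hq
  set h : ℝ → ℝ := fun x => g x - f x - b x with hh
  have hc : Continuous h := by continuity
  have hint : ∀ a c : ℝ, IntervalIntegrable h MeasureTheory.volume a c :=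
    fun a c => hc.intervalIntegrable a c
  have hr0 : h r = 0 := by simp [hh]; linarith
  have hanti : Antitone h := fun x y hxy => by
    have := hg hxy; have := hf hxy; have := hb hxy
    simp only [hh]; linarith
  have hadd : (∫ x in (0:ℝ)..q, h x) + (∫ x in q..r, h x) = ∫ x in (0:ℝ)..r, h x :=
    intervalIntegral.integral_add_adjacent_intervals (hint 0 q) (hint q r)
  have key : 0 ≤ ∫ x in q..r, h x := by
    rcases le_total q r with hqr | hrq
    · apply intervalIntegral.integral_nonneg hqr
      intro x hx
      have : h r ≤ h x := hanti hx.2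
      linarith
    · have hnn : 0 ≤ ∫ x in r..q, -h x := by
        apply intervalIntegral.integral_nonneg hrq
        intro x hx
        have : h x ≤ h r := hanti hx.1
        simp only [neg_nonneg]
        linarith
      rw [intervalIntegral.integral_neg] at hnn
      rw [intervalIntegral.integral_symm r q]
      linarith
  simp only [Set.mem_setOf_eq] at *
  show (∫ x in (0:ℝ)..q, h x) ≤ ∫ x in (0:ℝ)..r, h x
  linarith
end
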